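/- A ring R is NJ-symmetric if and only if for all a, b, c in R, abc nilpotent implies cba lies in the Jacobson radical of R. -/
import Mathlib

lemma pow_swap {R : Type*} [Ring R] (x y : R) (n : ℕ) :
    (y * x) ^ (n + 1) = y * (x * y) ^ n * x := by
  induction n with
  | zero => simp [pow_succ, mul_assoc]
  | succ k ih => rw [pow_succ, ih, pow_succ]; noncomm_ring

lemma nilp_swap {R : Type*} [Ring R] {x y : R} (h : IsNilpotent (x * y)) :
    IsNilpotent (y * x) := by
  obtain ⟨n, hn⟩ := h
  exact ⟨n + 1, by rw [pow_swap, hn, mul_zero, zero_mul]⟩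

/-- A ring `R` is NJ-symmetric if for all `a b c`, `a*b*c` nilpotent implies
`b*a*c` lies in the Jacobson radical. -/
def NJSymmetric (R : Type*) [Ring R] : Prop :=
  ∀ a b c : R, IsNilpotent (a * b * c) → b * a * c ∈ (⊥ : Ideal R).jacobson

theorem stmt_1 (R : Type*) [Ring R] :
    NJSymmetric R ↔
      ∀ a b c : R, IsNilpotent (a * b * c) → c * b * a ∈ (⊥ : Ideal R).jacobson := by
  constructor
  · intro H a b c h
    exact H b c a (nilp_swap (mul_assoc a b c ▸ h))
  · intro H a b c h
    have h' : IsNilpotent (c * (a * b)) := nilp_swap (x := a * b) (y := c) h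
    rw [← mul_assoc] at h'
    exact H c a b h'
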